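/- Let ℓ ≥ 1 be an integer, a = 2π/(2ℓ+1), and for j = -ℓ,…,ℓ let p_j be the polynomial in ℂ[x₁,x₂,x₃] given by p_j = (x₁ + i·sin(j·a)·x₂ + i·cos(j·a)·x₃)^ℓ. Then the family (p_j)_{j=-ℓ..ℓ} of 2ℓ+1 polynomials is linearly independent over ℂ. -/

import Mathlib

open MvPolynomial

/-- The null-vector polynomial `p_j = (x₁ + i sin(j a) x₂ + i cos(j a) x₃)^ℓ`
with `a = 2π/(2ℓ+1)`. -/
noncomputable def nullPoly (ℓ : ℕ) (j : ℤ) : MvPolynomial (Fin 3) ℂ :=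
  (X 0
    + C (Complex.I * (Real.sin ((j : ℝ) * (2 * Real.pi / (2 * ℓ + 1))) : ℂ)) * X 1
    + C (Complex.I * (Real.cos ((j : ℝ) * (2 * Real.pi / (2 * ℓ + 1))) : ℂ)) * X 2) ^ ℓ

section Aux

lemma finsupp3_eq_iff {x y z x' y' z' : ℕ} :
    (Finsupp.single 0 x + Finsupp.single 1 y + Finsupp.single 2 z : Fin 3 →₀ ℕ)
      = Finsupp.single 0 x' + Finsupp.single 1 y' + Finsupp.single 2 z' ↔
    x = x' ∧ y = y' ∧ z = z' := by
  constructor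
  · intro h
    refine ⟨?_, ?_, ?_⟩
    · have := DFunLike.congr_fun h 0; simpa [Finsupp.single_apply] using this
    · have := DFunLike.congr_fun h 1; simpa [Finsupp.single_apply] using this
    · have := DFunLike.congr_fun h 2; simpa [Finsupp.single_apply] using this
  · rintro ⟨rfl, rfl, rfl⟩; rfl

lemma coeff_trinom (ℓ m n : ℕ) (h : m + n ≤ ℓ) (a b : ℂ) :
    coeff (Finsupp.single 0 (ℓ - (m+n)) + Finsupp.single 1 m + Finsupp.single 2 n)
      ((X 0 + C a * X 1 + C b * X 2 : MvPolynomial (Fin 3) ℂ) ^ ℓ)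
    = (ℓ.choose (m+n) * (m+n).choose m : ℕ) * a ^ m * b ^ n := by
  have expand : ((X 0 + C a * X 1 + C b * X 2 : MvPolynomial (Fin 3) ℂ)) ^ ℓ
      = ∑ k ∈ Finset.range (ℓ+1), ∑ i ∈ Finset.range (ℓ - k + 1),
          monomial (Finsupp.single 0 k + Finsupp.single 1 i + Finsupp.single 2 (ℓ - k - i))
            ((ℓ.choose k * (ℓ-k).choose i : ℕ) * (a ^ i * b ^ (ℓ - k - i))) := by
    rw [add_assoc, add_pow]
    refine Finset.sum_congr rfl fun k hk => ?_
    rw [add_pow, Finset.mul_sum, Finset.sum_mul]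
    refine Finset.sum_congr rfl fun i hi => ?_
    rw [show ((ℓ.choose k : MvPolynomial (Fin 3) ℂ)) = C (ℓ.choose k : ℂ) by rfl,
        show (((ℓ-k).choose i : MvPolynomial (Fin 3) ℂ)) = C ((ℓ-k).choose i : ℂ) by rfl]
    simp only [mul_pow, X_pow_eq_monomial, C_apply, monomial_pow, smul_zero, monomial_mul,
      zero_add, add_zero, one_mul, mul_one]
    congr 1
    · abel
    · push_cast; ring
  rw [expand, coeff_sum]
  rw [Finset.sum_eq_single (ℓ - (m+n))]
  · rw [coeff_sum, Finset.sum_eq_single m]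
    · rw [coeff_monomial, if_pos]
      · rw [Nat.choose_symm h]
        have h2 : ℓ - (ℓ - (m+n)) = m + n := Nat.sub_sub_self h
        rw [h2]
        have h3 : m + n - m = n := by omega
        rw [h3]
        ring
      · rw [finsupp3_eq_iff]
        refine ⟨rfl, rfl, by omega⟩
    · intro i hi hne
      rw [coeff_monomial, if_neg]
      rw [finsupp3_eq_iff]
      rintro ⟨-, rfl, -⟩; exact hne rfl
    · intro hm
      exfalso; apply hm
      simp only [Finset.mem_range]
      omega
  · intro k hk hne
    rw [coeff_sum]
    refine Finset.sum_eq_zero fun i hi => ?_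
    rw [coeff_monomial, if_neg]
    rw [finsupp3_eq_iff]
    rintro ⟨rfl, -, -⟩; exact hne rfl
  · intro hk
    exfalso; apply hk
    simp only [Finset.mem_range]; omega

noncomputable def omg (ℓ : ℕ) : ℂ :=
  Complex.exp (((2 * Real.pi / (2 * ℓ + 1) : ℝ) : ℂ) * Complex.I)

lemma omg_ne_zero (ℓ : ℕ) : omg ℓ ≠ 0 := Complex.exp_ne_zero _

lemma omg_zpow (ℓ : ℕ) (j : ℤ) :
    omg ℓ ^ j = (Real.cos ((j : ℝ) * (2 * Real.pi / (2 * ℓ + 1))) : ℂ)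
      + (Real.sin ((j : ℝ) * (2 * Real.pi / (2 * ℓ + 1))) : ℂ) * Complex.I := by
  rw [omg, ← Complex.exp_int_mul]
  rw [show ((j : ℂ) * (((2 * Real.pi / (2 * ℓ + 1) : ℝ) : ℂ) * Complex.I))
      = (((j : ℝ) * (2 * Real.pi / (2 * ℓ + 1)) : ℝ) : ℂ) * Complex.I by push_cast; ring]
  rw [Complex.exp_mul_I, Complex.ofReal_cos, Complex.ofReal_sin]

noncomputable def psi : MvPolynomial (Fin 3) ℂ →ₐ[ℂ] MvPolynomial (Fin 3) ℂ :=
  aeval ![X 0, X 1 - X 2, -(C Complex.I) * (X 1 + X 2)]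

lemma psi_nullPoly (ℓ : ℕ) (j : ℤ) :
    psi (nullPoly ℓ j)
      = (X 0 + C (omg ℓ ^ j) * X 1 + C (omg ℓ ^ (-j)) * X 2) ^ ℓ := by
  rw [nullPoly, map_pow]
  congr 1
  rw [omg_zpow ℓ j, omg_zpow ℓ (-j)]
  rw [show ((-j : ℤ) : ℝ) * (2 * Real.pi / (2 * ℓ + 1))
      = -((j : ℝ) * (2 * Real.pi / (2 * ℓ + 1))) by push_cast; ring]
  rw [Real.cos_neg, Real.sin_neg]
  simp only [psi, map_add, map_mul, aeval_X, aeval_C, algebraMap_eq,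
    Matrix.cons_val_zero, Matrix.cons_val_one, Matrix.head_cons, Matrix.cons_val_two,
    Matrix.tail_cons]
  simp only [map_mul, map_add, map_sub, map_neg, Complex.ofReal_neg, map_one]
  ring_nf
  rw [show ((C Complex.I : MvPolynomial (Fin 3) ℂ) ^ 2) = -1 by
    rw [← map_pow, Complex.I_sq, map_neg, map_one]]
  ring

lemma omg_inj (ℓ : ℕ) {d d' : ℤ} (hd : d ∈ Finset.Icc (-(ℓ : ℤ)) ℓ)
    (hd' : d' ∈ Finset.Icc (-(ℓ : ℤ)) ℓ) (h : omg ℓ ^ d = omg ℓ ^ d') : d = d' := by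
  rw [Finset.mem_Icc] at hd hd'
  rw [omg, ← Complex.exp_int_mul, ← Complex.exp_int_mul,
    Complex.exp_eq_exp_iff_exists_int] at h
  obtain ⟨n, hn⟩ := h
  have him := congrArg Complex.im hn
  simp only [Complex.add_im, Complex.mul_im, Complex.ofReal_im, Complex.ofReal_re,
    Complex.I_im, Complex.I_re, Complex.intCast_im, Complex.intCast_re, Complex.mul_re,
    Complex.re_ofNat, Complex.im_ofNat, mul_zero, zero_mul, mul_one, one_mul,
    add_zero, zero_add, sub_zero, zero_sub] at him
  have hden : ((2 * ℓ + 1 : ℝ)) ≠ 0 := by positivity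
  have hπ : (2 * Real.pi) ≠ 0 := by positivity
  field_simp at him
  have h4 : ((d - d' - n * (2 * ℓ + 1) : ℤ) : ℝ) * (2 * Real.pi) = 0 := by
    push_cast
    linear_combination (2 * Real.pi) * him
  have h5 : ((d - d' - n * (2 * ℓ + 1) : ℤ) : ℝ) = 0 := by
    rcases mul_eq_zero.mp h4 with h | h
    · exact h
    · exact absurd h hπ
  have h6 : d - d' - n * (2 * ℓ + 1) = 0 := by exact_mod_cast h5
  have hmono : (0 : ℤ) ≤ 2 * ℓ + 1 := by positivity
  rcases lt_trichotomy n 0 with h | h | h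
  · exfalso
    have := mul_le_mul_of_nonneg_right (show n ≤ -1 by omega) hmono
    rw [neg_one_mul] at this
    linarith [hd.1, hd.2, hd'.1, hd'.2]
  · subst h
    simp only [zero_mul] at h6
    omega
  · exfalso
    have := mul_le_mul_of_nonneg_right (show (1 : ℤ) ≤ n by omega) hmono
    rw [one_mul] at this
    linarith [hd.1, hd.2, hd'.1, hd'.2]

end Aux

theorem linearIndependent_nullPoly (ℓ : ℕ) (hℓ : 1 ≤ ℓ) :
    LinearIndependent ℂ (fun j : (Finset.Icc (-(ℓ : ℤ)) ℓ) => nullPoly ℓ j.1) := by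
  classical
  rw [Fintype.linearIndependent_iff]
  intro g hg j₀
  have hψ : ∑ j : (Finset.Icc (-(ℓ : ℤ)) ℓ),
      g j • ((X 0 + C (omg ℓ ^ (j : ℤ)) * X 1 + C (omg ℓ ^ (-(j : ℤ))) * X 2 : MvPolynomial (Fin 3) ℂ)) ^ ℓ = 0 := by
    have h1 := congrArg psi hg
    rw [map_sum, map_zero] at h1
    simpa only [map_smul, psi_nullPoly] using h1
  have hsum : ∀ d : ℤ, d.natAbs ≤ ℓ →
      ∑ j : (Finset.Icc (-(ℓ : ℤ)) ℓ), g j * omg ℓ ^ ((j : ℤ) * d) = 0 := by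
    intro d hdl
    have hle : d.toNat + (-d).toNat ≤ ℓ := by omega
    have hKpos : 0 < ℓ.choose (d.toNat + (-d).toNat) * (d.toNat + (-d).toNat).choose d.toNat :=
      Nat.mul_pos (Nat.choose_pos hle) (Nat.choose_pos (by omega))
    have h2 := congrArg (coeff (Finsupp.single 0 (ℓ - (d.toNat + (-d).toNat))
        + Finsupp.single 1 d.toNat + Finsupp.single 2 (-d).toNat)) hψ
    rw [coeff_sum, coeff_zero] at h2
    simp only [coeff_smul, coeff_trinom ℓ d.toNat (-d).toNat hle] at h2
    have key : ∀ j : (Finset.Icc (-(ℓ : ℤ)) ℓ),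
        g j • (((ℓ.choose (d.toNat + (-d).toNat) * (d.toNat + (-d).toNat).choose d.toNat : ℕ) : ℂ)
          * (omg ℓ ^ ((j : ℤ))) ^ d.toNat * (omg ℓ ^ (-(j : ℤ))) ^ (-d).toNat)
        = ((ℓ.choose (d.toNat + (-d).toNat) * (d.toNat + (-d).toNat).choose d.toNat : ℕ) : ℂ)
          * (g j * omg ℓ ^ ((j : ℤ) * d)) := by
      intro j
      have hz : (omg ℓ ^ ((j : ℤ))) ^ d.toNat * (omg ℓ ^ (-(j : ℤ))) ^ (-d).toNat
          = omg ℓ ^ ((j : ℤ) * d) := by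
        rw [← zpow_natCast (omg ℓ ^ ((j : ℤ))), ← zpow_natCast (omg ℓ ^ (-(j : ℤ))),
          ← zpow_mul, ← zpow_mul, ← zpow_add₀ (omg_ne_zero ℓ)]
        congr 1
        have hdd : (d.toNat : ℤ) - ((-d).toNat : ℤ) = d := by omega
        linear_combination (j : ℤ) * hdd
      rw [smul_eq_mul, mul_assoc, hz]
      ring
    rw [Finset.sum_congr rfl (fun j _ => key j), ← Finset.mul_sum] at h2
    rcases mul_eq_zero.mp h2 with hK | h0
    · exfalso
      rw [Nat.cast_eq_zero] at hK
      omega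
    · exact h0
  -- the auxiliary single-variable polynomial
  let Q : Polynomial ℂ := ∑ j : (Finset.Icc (-(ℓ : ℤ)) ℓ),
      Polynomial.C (g j) * Polynomial.X ^ ((j : ℤ) + ℓ).toNat
  have hQdeg : Q.natDegree ≤ 2 * ℓ := by
    apply Polynomial.natDegree_sum_le_of_forall_le
    intro j _
    refine le_trans (Polynomial.natDegree_C_mul_X_pow_le _ _) ?_
    have hj := Finset.mem_Icc.mp j.2
    omega
  have hroots : ∀ d : ℤ, d ∈ Finset.Icc (-(ℓ : ℤ)) ℓ → Q.eval (omg ℓ ^ d) = 0 := by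
    intro d hd
    have hd' : d.natAbs ≤ ℓ := by
      rw [Finset.mem_Icc] at hd; omega
    have heval : Q.eval (omg ℓ ^ d) = omg ℓ ^ ((ℓ : ℤ) * d)
        * ∑ j : (Finset.Icc (-(ℓ : ℤ)) ℓ), g j * omg ℓ ^ ((j : ℤ) * d) := by
      rw [Polynomial.eval_finset_sum, Finset.mul_sum]
      refine Finset.sum_congr rfl fun j _ => ?_
      rw [Polynomial.eval_mul, Polynomial.eval_C, Polynomial.eval_pow, Polynomial.eval_X]
      rw [← zpow_natCast (omg ℓ ^ d), ← zpow_mul]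
      have hj0 : (0 : ℤ) ≤ (j : ℤ) + ℓ := by
        have := (Finset.mem_Icc.mp j.2).1; omega
      rw [Int.toNat_of_nonneg hj0]
      rw [show d * ((j : ℤ) + ℓ) = (j : ℤ) * d + (ℓ : ℤ) * d by ring,
        zpow_add₀ (omg_ne_zero ℓ)]
      ring
    rw [heval, hsum d hd', mul_zero]
  have hQ0 : Q = 0 := by
    apply Polynomial.eq_zero_of_natDegree_lt_card_of_eval_eq_zero' Q
      ((Finset.Icc (-(ℓ : ℤ)) ℓ).image (fun d => omg ℓ ^ d))
    · intro x hx
      obtain ⟨d, hd, rfl⟩ := Finset.mem_image.mp hx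
      exact hroots d hd
    · rw [Finset.card_image_of_injOn (fun d hd d' hd' h => omg_inj ℓ hd hd' h), Int.card_Icc]
      have : ((ℓ : ℤ) + 1 - -(ℓ : ℤ)).toNat = 2 * ℓ + 1 := by omega
      omega
  have hc := congrArg (fun p => Polynomial.coeff p ((j₀ : ℤ) + ℓ).toNat) hQ0
  simp only [Polynomial.coeff_zero] at hc
  rw [Polynomial.finset_sum_coeff] at hc
  rw [Finset.sum_eq_single j₀] at hc
  · rwa [Polynomial.coeff_C_mul, Polynomial.coeff_X_pow, if_pos rfl, mul_one] at hc
  · intro j _ hne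
    rw [Polynomial.coeff_C_mul, Polynomial.coeff_X_pow, if_neg, mul_zero]
    intro hEq
    apply hne
    apply Subtype.ext
    have hj := (Finset.mem_Icc.mp j.2).1
    have hj0 := (Finset.mem_Icc.mp j₀.2).1
    omega
  · intro h
    exact absurd (Finset.mem_univ j₀) h
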